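/- Let s ∈ (0,1). For β > 0 let y(β) denote the unique y ∈ (0,1) satisfying (1 − y²)^s = β·y. Then there exist δ > 0 and a sequence of real numbers (a_j)_{j≥1} such that for all β ∈ (0,δ) the series Σ_{j=1}^∞ a_j β^{j/s} converges absolutely and y(β) = 1 − (β^{1/s}/2)·(1 + Σ_{j=1}^∞ a_j β^{j/s}). -/

import Mathlib

open Real Filter Topology
set_option maxHeartbeats 2000000

lemma analyticAt_one_sub_rpow (c : ℝ) : AnalyticAt ℝ (fun x : ℝ => (1 - x) ^ c) 0 := by
  have hC : AnalyticAt ℂ (fun z : ℂ => (1 - z) ^ (c : ℂ)) 0 := by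
    apply AnalyticAt.cpow (analyticAt_const.sub analyticAt_id) analyticAt_const
    simpa using Complex.one_mem_slitPlane
  have hR : AnalyticAt ℝ (fun z : ℂ => (1 - z) ^ (c : ℂ)) 0 := hC.restrictScalars
  have h2 : AnalyticAt ℝ (fun x : ℝ => ((x : ℂ))) 0 := Complex.ofRealCLM.analyticAt 0
  have h3 : AnalyticAt ℝ (fun x : ℝ => (1 - (x : ℂ)) ^ (c : ℂ)) 0 := by
    have := hR.comp (f := fun x : ℝ => ((x : ℂ))) (by simpa using h2)
    simpa [Function.comp_def] using this
  have h1 : AnalyticAt ℝ (fun x : ℝ => ((1 - (x : ℂ)) ^ (c : ℂ)).re) 0 := by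
    have := AnalyticAt.comp (g := fun z : ℂ => z.re)
      (f := fun x : ℝ => (1 - (x : ℂ)) ^ (c : ℂ)) (x := 0)
      (Complex.reCLM.analyticAt _) h3
    simpa [Function.comp_def] using this
  apply h1.congr
  filter_upwards [Metric.ball_mem_nhds (0 : ℝ) one_pos] with x hx
  have hx1 : (0:ℝ) ≤ 1 - x := by
    simp [Real.ball_eq_Ioo] at hx; linarith [hx.2]
  have := Complex.ofReal_cpow hx1 c
  rw [show (1 : ℂ) - (x : ℂ) = ((1 - x : ℝ) : ℂ) by push_cast; ring, ← this]
  simp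



/-- Small-`β` expansion of the root `y(β)` of `(1 - y^2)^s = β y`:
there are `δ > 0` and coefficients `(a_j)_{j ≥ 1}` such that for all `β ∈ (0, δ)`
the series `∑_{j=1}^∞ a_j β^{j/s}` converges absolutely and
`y(β) = 1 - (β^{1/s}/2) (1 + ∑_{j=1}^∞ a_j β^{j/s})`. -/
theorem stmt_1 (s : ℝ) (hs0 : 0 < s) (hs1 : s < 1) :
    ∃ δ : ℝ, 0 < δ ∧ ∃ a : ℕ → ℝ,
      ∀ β : ℝ, β ∈ Set.Ioo (0 : ℝ) δ →
        ∀ y : ℝ, y ∈ Set.Ioo (0 : ℝ) 1 → (1 - y ^ 2) ^ s = β * y →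
          Summable (fun j : ℕ => |a (j + 1) * β ^ (((j : ℝ) + 1) / s)|) ∧
          y = 1 - (β ^ (1 / s) / 2) *
                (1 + ∑' j : ℕ, a (j + 1) * β ^ (((j : ℝ) + 1) / s)) := by

  have hsne : s ≠ 0 := ne_of_gt hs0
  set c : ℝ := -(1 / s) with hc
  set G : ℝ → ℝ := fun x => x * (2 - x) * (1 - x) ^ c with hGdef
  have hG0 : G 0 = 0 := by simp [hGdef]
  -- analyticity of G at 0
  have hGa : AnalyticAt ℝ G 0 := by
    have h1 : AnalyticAt ℝ (fun x : ℝ => x * (2 - x)) 0 := by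
      exact (analyticAt_id.mul (analyticAt_const.sub analyticAt_id))
    exact h1.mul (analyticAt_one_sub_rpow c)
  -- strict derivative of G at 0 is 2
  have hG' : HasStrictDerivAt G 2 0 := by
    have hP : HasStrictDerivAt (fun x : ℝ => x * (2 - x)) 2 0 := by
      have := (hasStrictDerivAt_id (0:ℝ)).mul
        ((hasStrictDerivAt_const (0:ℝ) (2:ℝ)).sub (hasStrictDerivAt_id 0))
      simpa [Pi.mul_def, Pi.sub_def] using this
    have h1 : HasStrictDerivAt (fun x : ℝ => 1 - x) (-1) 0 := by
      simpa [Pi.sub_def] using (hasStrictDerivAt_const (0:ℝ) (1:ℝ)).sub (hasStrictDerivAt_id 0)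
    have h2 : HasStrictDerivAt (fun x : ℝ => x ^ c) (c * 1 ^ (c - 1))
        ((fun x : ℝ => 1 - x) 0) := by
      simpa using hasStrictDerivAt_rpow_const (x := (1:ℝ)) (p := c) (Or.inl one_ne_zero)
    have := hP.mul (h2.comp 0 h1)
    simpa [Real.one_rpow, hGdef, Pi.mul_def, Function.comp_def] using this
  have h2ne : (2:ℝ) ≠ 0 := two_ne_zero
  have hF := hG'.hasStrictFDerivAt_equiv h2ne
  set φ : ℝ → ℝ := hF.localInverse G _ 0 with hφdef
  -- φ is analytic at 0
  have hφa : AnalyticAt ℝ φ 0 := by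
    have h0 : (0:ℝ) ∈ (HasStrictFDerivAt.toOpenPartialHomeomorph G hF).source := HasStrictFDerivAt.mem_toOpenPartialHomeomorph_source hF
    have := (HasStrictFDerivAt.toOpenPartialHomeomorph G hF).analyticAt_symm' h0 hGa (HasStrictFDerivAt.hasFDerivAt hF).fderiv
    rw [show (HasStrictFDerivAt.toOpenPartialHomeomorph G hF) 0 = G 0 from rfl, hG0] at this
    exact this
  -- φ has strict derivative 2⁻¹ at 0, and φ 0 = 0
  have hφd : HasStrictDerivAt φ 2⁻¹ 0 := by
    have := hG'.to_localInverse (hf' := h2ne)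
    rwa [hG0] at this
  have hφ0 : φ 0 = 0 := by
    have := hF.localInverse_apply_image
    rwa [hG0] at this
  -- power series of φ at 0
  obtain ⟨q, hq⟩ := hφa
  have hc0 : q.coeff 0 = 0 := by
    have h := hq.coeff_zero (fun _ => 1)
    rw [hφ0] at h
    exact h
  have hc1 : q.coeff 1 = 2⁻¹ := by
    have h1 : deriv φ 0 = 2⁻¹ := hφd.hasDerivAt.deriv
    have h2 : deriv φ 0 = q.coeff 1 := hq.deriv
    rw [← h2, h1]
  -- choose radii
  obtain ⟨rr, hrr0, hrrlt⟩ := ENNReal.lt_iff_exists_nnreal_btwn.1 hq.radius_pos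
  have hrr0' : (0:ℝ) < rr := by exact_mod_cast hrr0
  have hnorm : Summable fun n => ‖q.coeff n‖ * (rr:ℝ) ^ n := by
    have := q.summable_norm_mul_pow hrrlt
    simpa [FormalMultilinearSeries.norm_apply_eq_norm_coef] using this
  have hev : ∀ᶠ z in 𝓝 (0:ℝ),
      (φ (G z) = z ∧ HasSum (fun n => z ^ n • q.coeff n) (φ (0 + z))) :=
    hF.eventually_left_inverse.and (hasFPowerSeriesAt_iff.1 hq)
  obtain ⟨r1, hr10, hr1⟩ := Metric.eventually_nhds_iff.1 hev
  set r0 : ℝ := min r1 (rr : ℝ) with hr0def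
  have hr00 : 0 < r0 := lt_min hr10 hrr0'
  set m : ℝ := min r0 1 with hmdef
  have hm0 : 0 < m := lt_min hr00 one_pos
  have hm1 : m ≤ 1 := min_le_right _ _
  refine ⟨m ^ s, Real.rpow_pos_of_pos hm0 s, fun j => 2 * q.coeff (j + 1), ?_⟩
  rintro β ⟨hβ0, hβδ⟩ y ⟨hy0, hy1⟩ hy
  set t : ℝ := β ^ (1 / s) with htdef
  have ht0 : 0 < t := Real.rpow_pos_of_pos hβ0 _
  have htm : t < m := by
    have h1 : β ^ (1/s) < (m ^ s) ^ (1/s) :=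
      Real.rpow_lt_rpow hβ0.le hβδ (by positivity)
    rwa [← Real.rpow_mul hm0.le, mul_one_div, div_self hsne,
      Real.rpow_one] at h1
  have htr0 : t < r0 := lt_of_lt_of_le htm (min_le_left _ _)
  have htr1 : t < r1 := lt_of_lt_of_le htr0 (min_le_left _ _)
  have htrr : t < (rr : ℝ) := lt_of_lt_of_le htr0 (min_le_right _ _)
  set ε : ℝ := 1 - y with hεdef
  have hε0 : 0 < ε := by rw [hεdef]; linarith
  have hε1 : ε < 1 := by rw [hεdef]; linarith
  have h1ε0 : 0 < 1 - ε := by rw [hεdef]; linarith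
  have heq : (ε * (2 - ε)) ^ s = β * (1 - ε) := by
    rw [show ε * (2 - ε) = 1 - y ^ 2 by rw [hεdef]; ring,
      show (1 : ℝ) - ε = y by rw [hεdef]; ring]
    exact hy
  have h3 : ε * (2 - ε) = t * (1 - ε) ^ (1 / s) := by
    have hnn : 0 ≤ ε * (2 - ε) := by nlinarith
    have l1 : ((ε * (2 - ε)) ^ s) ^ (1 / s) = ε * (2 - ε) := by
      rw [← Real.rpow_mul hnn, mul_one_div, div_self hsne, Real.rpow_one]
    have l2 : (β * (1 - ε)) ^ (1 / s) = t * (1 - ε) ^ (1 / s) :=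
      Real.mul_rpow hβ0.le h1ε0.le
    rw [← l1, heq, l2]
  have hGε : G ε = t := by
    have hmulone : (1 - ε) ^ (1 / s) * (1 - ε) ^ c = 1 := by
      rw [← Real.rpow_add h1ε0, hc]; simp
    calc G ε = ε * (2 - ε) * (1 - ε) ^ c := rfl
      _ = t * ((1 - ε) ^ (1 / s) * (1 - ε) ^ c) := by rw [h3]; ring
      _ = t := by rw [hmulone, mul_one]
  have hεt : ε ≤ t := by
    have h4 : (1 - ε) ^ (1 / s) ≤ 1 :=
      Real.rpow_le_one h1ε0.le (by linarith) (by positivity)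
    have h5 : t * (1 - ε) ^ (1 / s) ≤ t := mul_le_of_le_one_right ht0.le h4
    nlinarith [h3]
  have hφt : φ t = ε := by
    have hεr : dist ε (0 : ℝ) < r1 := by
      rw [Real.dist_eq, sub_zero, abs_of_pos hε0]; linarith
    have := (hr1 hεr).1
    rwa [hGε] at this
  have hsum : HasSum (fun n : ℕ => t ^ n * q.coeff n) (φ t) := by
    have hdt : dist t (0 : ℝ) < r1 := by
      rw [Real.dist_eq, sub_zero, abs_of_pos ht0]; exact htr1
    have := (hr1 hdt).2
    simpa using this
  have hrw : ∀ j : ℕ, β ^ (((j : ℝ) + 1) / s) = t ^ (j + 1) := fun j => by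
    rw [show ((j : ℝ) + 1) / s = (1 / s) * (((j + 1 : ℕ) : ℝ)) by push_cast; ring,
      Real.rpow_mul hβ0.le, Real.rpow_natCast]
  -- summability
  have hsum2 : Summable fun j : ℕ => ‖q.coeff (j + 2)‖ * (rr : ℝ) ^ (j + 2) :=
    (summable_nat_add_iff 2).2 hnorm
  have hS : Summable fun j : ℕ => (2 / (rr : ℝ)) * (‖q.coeff (j + 2)‖ * (rr : ℝ) ^ (j + 2)) :=
    hsum2.mul_left _
  have goal1 : Summable fun j : ℕ => |2 * q.coeff (j + 1 + 1) * t ^ (j + 1)| := by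
    apply Summable.of_nonneg_of_le (fun j => abs_nonneg _) _ hS
    intro j
    have habs : |2 * q.coeff (j + 1 + 1) * t ^ (j + 1)| =
        2 * ‖q.coeff (j + 2)‖ * t ^ (j + 1) := by
      rw [abs_mul, abs_mul, abs_of_nonneg (pow_nonneg ht0.le _)]
      simp [Real.norm_eq_abs]
    rw [habs]
    have hpow : t ^ (j + 1) ≤ (rr : ℝ) ^ (j + 1) := pow_le_pow_left₀ ht0.le htrr.le _
    calc 2 * ‖q.coeff (j + 2)‖ * t ^ (j + 1)
        ≤ 2 * ‖q.coeff (j + 2)‖ * (rr : ℝ) ^ (j + 1) := by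
          have : (0:ℝ) ≤ 2 * ‖q.coeff (j + 2)‖ := by positivity
          exact mul_le_mul_of_nonneg_left hpow this
      _ = 2 / (rr : ℝ) * (‖q.coeff (j + 2)‖ * (rr : ℝ) ^ (j + 2)) := by
          rw [show j + 2 = (j + 1) + 1 from rfl, pow_succ]
          field_simp; ring
  -- the sum identity
  have hS2 : ∑ i ∈ Finset.range 2, (t ^ i * q.coeff i) = t / 2 := by
    rw [Finset.sum_range_succ, Finset.sum_range_one, hc0, hc1]
    ring
  have h5 : HasSum (fun n : ℕ => t ^ (n + 2) * q.coeff (n + 2)) (φ t - t / 2) := by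
    refine (hasSum_nat_add_iff (f := fun n : ℕ => t ^ n * q.coeff n) 2).2 ?_
    rw [hS2, sub_add_cancel]
    exact hsum
  have h6 := h5.mul_left (2 / t)
  have hfun2 : (fun n : ℕ => (2 / t) * (t ^ (n + 2) * q.coeff (n + 2))) =
      fun j : ℕ => 2 * q.coeff (j + 1 + 1) * t ^ (j + 1) := by
    funext n
    rw [show n + 2 = (n + 1) + 1 from rfl, pow_succ]
    field_simp
  rw [hfun2] at h6
  have htsum : ∑' j : ℕ, 2 * q.coeff (j + 1 + 1) * t ^ (j + 1) = 2 / t * (φ t - t / 2) :=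
    h6.tsum_eq
  constructor
  · simp only [hrw]
    exact goal1
  · simp only [hrw]
    rw [htsum, hφt]
    have : t / 2 * (1 + 2 / t * (ε - t / 2)) = ε := by
      field_simp
      ring
    rw [this, hεdef]
    ring
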